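/- Let {q̂_i}_{i∈I} and {q_i}_{i∈I} each be orthonormal families in ℝ^p with ∑_{i∈I} q̂_i q̂_i^⊤ = ∑_{i∈I} q_i q_i^⊤, and let c_i ≥ 0 for all i. Then ‖∑_{i∈I} c_i (q̂_i q̂_i^⊤ − q_i q_i^⊤)‖_F² ≤ ∑_{i∈I} c_i² ‖q̂_i q̂_i^⊤ − q_i q_i^⊤‖_F², since the cross terms tr[(q̂_i q̂_i^⊤ − q_i q_i^⊤)(q̂_j q̂_j^⊤ − q_j q_j^⊤)] = −(q̂_i^⊤q_j)² − (q_i^⊤q̂_j)² ≤ 0 for i ≠ j. -/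
import Mathlib


open Matrix

theorem frobenius_sq_sum_proj_diff_le {I : Type*} [Fintype I] [DecidableEq I] (p : ℕ)
    (q qh : I → Fin p → ℝ) (c : I → ℝ) (hc : ∀ i, 0 ≤ c i)
    (hq : ∀ i j : I, q i ⬝ᵥ q j = if i = j then 1 else 0)
    (hqh : ∀ i j : I, qh i ⬝ᵥ qh j = if i = j then 1 else 0)
    (hproj : ∑ i : I, vecMulVec (qh i) (qh i) = ∑ i : I, vecMulVec (q i) (q i)) :
    (∑ a : Fin p, ∑ b : Fin p,
        ((∑ i : I, c i • (vecMulVec (qh i) (qh i) - vecMulVec (q i) (q i))) a b) ^ 2) ≤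
      ∑ i : I, (c i) ^ 2 *
        ∑ a : Fin p, ∑ b : Fin p,
          ((vecMulVec (qh i) (qh i) - vecMulVec (q i) (q i)) a b) ^ 2 := by
  classical
  set D : I → Matrix (Fin p) (Fin p) ℝ :=
    fun i => vecMulVec (qh i) (qh i) - vecMulVec (q i) (q i) with hDdef
  set f : I → I → ℝ := fun i j => ∑ a, ∑ b, D i a b * D j a b with hfdef
  have hpair : ∀ u w : Fin p → ℝ,
      (∑ a, ∑ b, (u a * u b) * (w a * w b)) = (u ⬝ᵥ w) * (u ⬝ᵥ w) := by
    intro u w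
    rw [dotProduct, Finset.sum_mul_sum]
    refine Finset.sum_congr rfl fun a _ => Finset.sum_congr rfl fun b _ => by ring
  have hf : ∀ i j, f i j =
      (qh i ⬝ᵥ qh j) * (qh i ⬝ᵥ qh j) - (qh i ⬝ᵥ q j) * (qh i ⬝ᵥ q j)
        - (q i ⬝ᵥ qh j) * (q i ⬝ᵥ qh j) + (q i ⬝ᵥ q j) * (q i ⬝ᵥ q j) := by
    intro i j
    have : f i j = ∑ a, ∑ b,
        ((qh i a * qh i b) * (qh j a * qh j b) - (qh i a * qh i b) * (q j a * q j b)
          - (q i a * q i b) * (qh j a * qh j b) + (q i a * q i b) * (q j a * q j b)) := by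
      simp only [hfdef, hDdef, Matrix.sub_apply, vecMulVec_apply]
      refine Finset.sum_congr rfl fun a _ => Finset.sum_congr rfl fun b _ => by ring
    rw [this]
    simp only [Finset.sum_sub_distrib, Finset.sum_add_distrib, hpair]
  have hcross : ∀ i j, i ≠ j → f i j ≤ 0 := by
    intro i j hij
    rw [hf i j, hq i j, hqh i j]
    simp only [if_neg hij]
    nlinarith [sq_nonneg (qh i ⬝ᵥ q j), sq_nonneg (q i ⬝ᵥ qh j)]
  have hL : (∑ a : Fin p, ∑ b : Fin p, ((∑ i : I, c i • D i) a b) ^ 2)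
      = ∑ i : I, ∑ j : I, (c i * c j) * f i j := by
    have h1 : ∀ a b, ((∑ i : I, c i • D i) a b) ^ 2
        = ∑ i : I, ∑ j : I, (c i * c j) * (D i a b * D j a b) := by
      intro a b
      rw [Matrix.sum_apply, sq, Finset.sum_mul_sum]
      refine Finset.sum_congr rfl fun i _ => Finset.sum_congr rfl fun j _ => by
        simp [Matrix.smul_apply]; ring
    simp only [h1]
    have swap : ∀ g : I → I → Fin p → Fin p → ℝ,
        (∑ a : Fin p, ∑ b : Fin p, ∑ i : I, ∑ j : I, g i j a b)
          = ∑ i : I, ∑ j : I, ∑ a : Fin p, ∑ b : Fin p, g i j a b := by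
      intro g
      calc (∑ a : Fin p, ∑ b : Fin p, ∑ i : I, ∑ j : I, g i j a b)
          = ∑ a : Fin p, ∑ i : I, ∑ b : Fin p, ∑ j : I, g i j a b :=
            Finset.sum_congr rfl fun a _ => Finset.sum_comm
        _ = ∑ i : I, ∑ a : Fin p, ∑ b : Fin p, ∑ j : I, g i j a b :=
            Finset.sum_comm
        _ = ∑ i : I, ∑ a : Fin p, ∑ j : I, ∑ b : Fin p, g i j a b :=
            Finset.sum_congr rfl fun i _ => Finset.sum_congr rfl fun a _ =>
              Finset.sum_comm
        _ = ∑ i : I, ∑ j : I, ∑ a : Fin p, ∑ b : Fin p, g i j a b :=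
            Finset.sum_congr rfl fun i _ => Finset.sum_comm
    rw [swap]
    refine Finset.sum_congr rfl fun i _ => Finset.sum_congr rfl fun j _ => ?_
    rw [hfdef]
    simp only [Finset.mul_sum]
  have hR : ∀ i, (∑ a : Fin p, ∑ b : Fin p, (D i a b) ^ 2) = f i i := by
    intro i
    simp only [hfdef, sq]
  rw [hL]
  calc ∑ i : I, ∑ j : I, (c i * c j) * f i j
      ≤ ∑ i : I, (c i)^2 * f i i := by
        refine Finset.sum_le_sum fun i _ => ?_
        have hdiag := Finset.sum_erase_add Finset.univ
          (fun j => (c i * c j) * f i j) (Finset.mem_univ i)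
        rw [← hdiag]
        have hoff : (∑ j ∈ Finset.univ.erase i, (c i * c j) * f i j) ≤ 0 := by
          refine Finset.sum_nonpos fun j hj => ?_
          exact mul_nonpos_of_nonneg_of_nonpos (mul_nonneg (hc i) (hc j))
            (hcross i j (Ne.symm (Finset.ne_of_mem_erase hj)))
        show (∑ j ∈ Finset.univ.erase i, (c i * c j) * f i j)
            + (c i * c i) * f i i ≤ c i ^ 2 * f i i
        rw [pow_two]
        linarith
    _ = ∑ i : I, (c i) ^ 2 * ∑ a : Fin p, ∑ b : Fin p, (D i a b) ^ 2 := by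
        simp only [hR]
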